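/- Multiple (n-fold) recursion theorem: for every k and every family f : Fin k → (ℕ →. ℕ) of partial recursive functions (each viewed as taking a (k+1)-tuple via iterated pairing), there exists a family of codes e : Fin k → ℕ such that for all i and x, φ_{e i}(x) = f i (⟨e 0, e 1, …, e (k-1), x⟩). -/

import Mathlib

open Nat.Partrec Nat.Partrec.Code

/-- The `e`-th partial computable function in a standard Gödel numbering. -/
def phi (e : ℕ) : ℕ →. ℕ :=
  (Denumerable.ofNat Nat.Partrec.Code e).eval

private theorem branch_partrec : ∀ (k : ℕ) (f : Fin k → ℕ →. ℕ),
    (∀ i, Nat.Partrec (f i)) →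
    Partrec (fun n : ℕ => if h : n.unpair.1 < k then f ⟨n.unpair.1, h⟩ n.unpair.2
      else Part.none)
  | 0, _, _ => by
    simpa using (Partrec.none : Partrec fun _ : ℕ => (Part.none : Part ℕ))
  | (k+1), f, hf => by
    have hlast : Partrec fun n : ℕ => f (Fin.last k) n.unpair.2 :=
      (Partrec.nat_iff.2 (hf (Fin.last k))).comp
        ((Primrec.snd.comp Primrec.unpair).to_comp)
    have hrest := branch_partrec k (fun i => f i.castSucc) (fun i => hf i.castSucc)
    have hc : Computable fun n : ℕ => decide (n.unpair.1 = k) :=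
      (Primrec.eq.comp (Primrec.fst.comp Primrec.unpair) (Primrec.const k)).decide.to_comp
    refine (Partrec.cond hc hlast hrest).of_eq fun n => ?_
    by_cases h : n.unpair.1 = k
    · simp only [h, decide_true, cond_true]
      rw [dif_pos (Nat.lt_succ_self k)]
      rfl
    · simp only [h, decide_false, cond_false]
      by_cases h2 : n.unpair.1 < k
      · rw [dif_pos h2, dif_pos (by omega : n.unpair.1 < k + 1)]
        rfl
      · rw [dif_neg h2, dif_neg (by omega)]

/-- Multiple (n-fold) recursion theorem: `k` mutually self-referential codes,
with the tuple `(e 0, …, e (k-1), x)` passed as an encoded list. -/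
theorem multiple_recursion (k : ℕ) (f : Fin k → ℕ →. ℕ)
    (hf : ∀ i, Nat.Partrec (f i)) :
    ∃ e : Fin k → ℕ, ∀ (i : Fin k) (x : ℕ),
      phi (e i) x = f i (Encodable.encode (List.ofFn e ++ [x])) := by
  have hG := branch_partrec k f hf
  -- the functional for the fixed point
  set F : Nat.Partrec.Code → ℕ →. ℕ := fun c n =>
    if h : n.unpair.1 < k then
      f ⟨n.unpair.1, h⟩ (Encodable.encode
        ((List.ofFn fun j : Fin k => Encodable.encode (c.curry (j : ℕ))) ++ [n.unpair.2]))
    else Part.none with hFdef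
  have harg : Computable fun p : Nat.Partrec.Code × ℕ =>
      Nat.pair p.2.unpair.1 (Encodable.encode
        ((List.ofFn fun j : Fin k => Encodable.encode (p.1.curry (j : ℕ))) ++ [p.2.unpair.2])) := by
    have hlist : Computable fun p : Nat.Partrec.Code × ℕ =>
        List.ofFn fun j : Fin k => Encodable.encode (p.1.curry (j : ℕ)) :=
      Computable.list_ofFn fun j =>
        Computable.encode.comp
          ((primrec₂_curry.comp Primrec.fst (Primrec.const (j : ℕ))).to_comp)
    have happ : Computable fun p : Nat.Partrec.Code × ℕ =>
        (List.ofFn fun j : Fin k => Encodable.encode (p.1.curry (j : ℕ))) ++ [p.2.unpair.2] :=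
      Computable.list_append.comp hlist
        (Computable.list_cons.comp
          ((Primrec.snd.comp (Primrec.unpair.comp Primrec.snd)).to_comp)
          (Computable.const []))
    exact Primrec₂.natPair.to_comp.comp
      ((Primrec.fst.comp (Primrec.unpair.comp Primrec.snd)).to_comp)
      (Computable.encode.comp happ)
  have hF : Partrec₂ F := by
    refine (hG.comp harg).of_eq fun p => ?_
    simp [hFdef, Nat.unpair_pair]
  obtain ⟨c, hc⟩ := fixed_point₂ hF
  refine ⟨fun i => Encodable.encode (c.curry (i : ℕ)), fun i x => ?_⟩
  have h1 : phi (Encodable.encode (c.curry (i : ℕ))) x = c.eval (Nat.pair (i : ℕ) x) := by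
    unfold phi
    rw [Denumerable.ofNat_encode]
    exact eval_curry c (i : ℕ) x
  rw [h1, hc, hFdef]
  simp only [Nat.unpair_pair]
  rw [dif_pos i.isLt]
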